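/- Fix k ≥ 1 and exponents e_1, …, e_k ∈ {+1, −1}, and define π : W^(k) → W by π(w_1, …, w_k) = w_1^{e_1} ⋯ w_k^{e_k}, where w^{+1} = w and w^{−1} is the formal inverse word. If X ⊆ W^(k) and the image π(X) is exponentially negligible in W, then X is exponentially negligible in W^(k). -/

import Mathlib

open Filter

namespace GenericSubgroups

/-- A word over the alphabet `Fin m × Bool` (generator index, with `true` = formal inverse). -/
abbrev Word (m : ℕ) := List (Fin m × Bool)

/-- The disk of radius `n` : words of length at most `n`. -/
def ball (m n : ℕ) : Set (Word m) := {w | w.length ≤ n}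

/-- The sphere of radius `n` : words of length exactly `n`. -/
def sphere (m n : ℕ) : Set (Word m) := {w | w.length = n}

/-- A set of words is exponentially negligible. -/
def ExpNegligible {m : ℕ} (X : Set (Word m)) : Prop :=
  ∃ α : ℝ, 0 < α ∧ α < 1 ∧
    ∀ᶠ n in atTop, ((X ∩ ball m n).ncard : ℝ) / ((ball m n).ncard : ℝ) ≤ α ^ n

/-- A set of words is exponentially generic if its complement is exponentially negligible. -/
def ExpGeneric {m : ℕ} (X : Set (Word m)) : Prop := ExpNegligible Xᶜ

/-- Disk of radius `n` in the set of `k`-tuples of words. -/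
def ballK (m k n : ℕ) : Set (Fin k → Word m) := {w | ∀ i, (w i).length ≤ n}

def ExpNegligibleK {m k : ℕ} (X : Set (Fin k → Word m)) : Prop :=
  ∃ α : ℝ, 0 < α ∧ α < 1 ∧
    ∀ᶠ n in atTop, ((X ∩ ballK m k n).ncard : ℝ) / ((ballK m k n).ncard : ℝ) ≤ α ^ n

def ExpGenericK {m k : ℕ} (X : Set (Fin k → Word m)) : Prop := ExpNegligibleK Xᶜ

variable {G : Type*} [Group G]

/-- Evaluation of a word in `G`, determined by the family `g` of generators. -/
def eval {m : ℕ} (g : Fin m → G) (w : Word m) : G :=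
  (w.map (fun p => if p.2 then (g p.1)⁻¹ else g p.1)).prod

/-- Word length of an element of `G`. -/
noncomputable def wlen {m : ℕ} (g : Fin m → G) (x : G) : ℕ :=
  sInf {n | ∃ w : Word m, w.length = n ∧ eval g w = x}

/-- Word metric on `G`. -/
noncomputable def wdist {m : ℕ} (g : Fin m → G) (x y : G) : ℕ := wlen g (x⁻¹ * y)

/-- Words of length exactly `n` representing the identity. -/
def V {m : ℕ} (g : Fin m → G) (n : ℕ) : Set (Word m) :=
  {w | w.length = n ∧ eval g w = 1}

/-- The gross cogrowth `θ = limsup (1/n) log_{2m} |V_n|`. -/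
noncomputable def cogrowth {m : ℕ} (g : Fin m → G) : ℝ :=
  limsup (fun n : ℕ => Real.logb (2 * m : ℝ) ((V g n).ncard : ℝ) / (n : ℝ)) atTop

/-- The four-point (quadrilateral) condition with constant `δ` for the word metric. -/
def FourPoint {m : ℕ} (g : Fin m → G) (δ : ℝ) : Prop :=
  ∀ p q r s : G,
    (wdist g p s : ℝ) + (wdist g q r : ℝ) ≤
      2 * δ + max ((wdist g p q : ℝ) + (wdist g r s : ℝ)) ((wdist g p r : ℝ) + (wdist g q s : ℝ))

/-- The Gromov product `(x|y)_1` with respect to the word metric. -/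
noncomputable def gp {m : ℕ} (g : Fin m → G) (x y : G) : ℝ :=
  ((wlen g x : ℝ) + (wlen g y : ℝ) - (wlen g (x⁻¹ * y) : ℝ)) / 2

/-- `x^e` where `e : Bool`, `true` meaning inverse. -/
def powB (x : G) (e : Bool) : G := if e then x⁻¹ else x

/-- Formal inverse of a word. -/
def winv {m : ℕ} (w : Word m) : Word m := (w.reverse).map (fun p => (p.1, !p.2))


open Topology
-- ## auxiliary lemmas

lemma ball_finite (m n : ℕ) : (ball m n).Finite := List.finite_length_le _ n

lemma sphere_finite (m n : ℕ) : (sphere m n).Finite := List.finite_length_eq _ n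

lemma sphere_ncard (m n : ℕ) : (sphere m n).ncard = (2 * m) ^ n := by
  have e : ↥(sphere m n) ≃ List.Vector (Fin m × Bool) n :=
    Equiv.subtypeEquivRight (fun l => by simp [sphere, List.Vector])
  rw [← Nat.card_coe_set_eq, Nat.card_congr e, Nat.card_eq_fintype_card, card_vector]
  simp [Fintype.card_prod, mul_comm]

lemma ball_lower (m n : ℕ) : (2 * m) ^ n ≤ (ball m n).ncard := by
  rw [← sphere_ncard m n]
  exact Set.ncard_le_ncard (fun w hw => le_of_eq hw) (ball_finite m n)

lemma ball_succ (m n : ℕ) : ball m (n + 1) = ball m n ∪ sphere m (n + 1) := by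
  ext w; simp [ball, sphere]; omega

lemma ball_upper (m n : ℕ) (hm : 1 ≤ m) : (ball m n).ncard ≤ (n + 1) * (2 * m) ^ n := by
  induction n with
  | zero =>
    have h0 : ball m 0 = {([] : Word m)} := by ext w; simp [ball]
    simp [h0]
  | succ n ih =>
    rw [ball_succ]
    calc (ball m n ∪ sphere m (n+1)).ncard ≤ (ball m n).ncard + (sphere m (n+1)).ncard :=
          Set.ncard_union_le _ _
      _ ≤ (n+1) * (2*m)^n + (2*m)^(n+1) := by rw [sphere_ncard]; omega
      _ ≤ (n+1+1) * (2*m)^(n+1) := by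
          have h1 : (2*m)^n ≤ (2*m)^(n+1) := Nat.pow_le_pow_right (by omega) (Nat.le_succ n)
          calc (n+1)*(2*m)^n + (2*m)^(n+1) ≤ (n+1)*(2*m)^(n+1) + (2*m)^(n+1) :=
                Nat.add_le_add_right (Nat.mul_le_mul_left _ h1) _
            _ = (n+1+1)*(2*m)^(n+1) := by ring
        
lemma ballK_eq_pi (m k n : ℕ) : ballK m k n = Set.univ.pi (fun _ : Fin k => ball m n) := by
  ext w; simp [ballK, ball, Set.mem_pi]

lemma ballK_ncard (m k n : ℕ) : (ballK m k n).ncard = (ball m n).ncard ^ k := by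
  rw [ballK_eq_pi, ← Nat.card_coe_set_eq,
    Nat.card_congr (Equiv.Set.univPi (fun _ : Fin k => ball m n)), Nat.card_pi]
  simp [← Nat.card_coe_set_eq]


lemma winv_length {m : ℕ} (w : Word m) : (winv w).length = w.length := by simp [winv]

lemma winv_winv {m : ℕ} (w : Word m) : winv (winv w) = w := by
  simp [winv, List.map_reverse, List.map_map, Function.comp_def, Bool.not_not]

lemma winv_injective {m : ℕ} : Function.Injective (winv (m := m)) := by
  intro a b hab
  have := congrArg winv hab
  rwa [winv_winv, winv_winv] at this

lemma flatten_inj_of_map_length {α : Type*} :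
    ∀ (L1 L2 : List (List α)), L1.map List.length = L2.map List.length →
      L1.flatten = L2.flatten → L1 = L2
  | [], [], _, _ => rfl
  | [], _ :: _, h, _ => by simp at h
  | _ :: _, [], h, _ => by simp at h
  | a :: L1, b :: L2, h, hf => by
    simp only [List.map_cons, List.cons.injEq] at h
    simp only [List.flatten_cons] at hf
    obtain ⟨hab, htl⟩ := List.append_inj hf h.1
    rw [hab, flatten_inj_of_map_length L1 L2 h.2 htl]

lemma key_count (m k n : ℕ) (e : Fin k → Bool) (X : Set (Fin k → Word m)) :
    (X ∩ ballK m k n).ncard ≤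
      (((fun w : Fin k → Word m =>
          (List.ofFn (fun i => if e i then winv (w i) else w i)).flatten) '' X)
        ∩ ball m (k*n)).ncard * (n+1)^k := by
  set π := fun w : Fin k → Word m =>
    (List.ofFn (fun i => if e i then winv (w i) else w i)).flatten with hπ
  set Y := (π '' X) ∩ ball m (k*n) with hY
  have hYfin : Y.Finite := (ball_finite m (k*n)).subset Set.inter_subset_right
  have := hYfin.to_subtype
  have hπmem : ∀ w : Fin k → Word m, w ∈ X ∩ ballK m k n → π w ∈ Y := by
    rintro w ⟨hwX, hwB⟩
    refine ⟨⟨w, hwX, rfl⟩, ?_⟩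
    show (π w).length ≤ k * n
    have h1 : (π w).length = ∑ i, (if e i then winv (w i) else w i).length := by
      simp [hπ, List.length_flatten, List.map_ofFn, Function.comp_def, List.sum_ofFn]
    rw [h1]
    calc ∑ i, (if e i then winv (w i) else w i).length ≤ ∑ _i : Fin k, n := by
          refine Finset.sum_le_sum fun i _ => ?_
          cases hei : e i <;> simp [winv_length, hwB i]
      _ = k * n := by simp [Finset.sum_const, mul_comm]
  set F : ↥(X ∩ ballK m k n) → ↥Y × (Fin k → Fin (n+1)) := fun w =>
    (⟨π w.1, hπmem w.1 w.2⟩, fun i => ⟨(w.1 i).length, Nat.lt_succ_of_le (w.2.2 i)⟩) with hF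
  have hFinj : Function.Injective F := by
    rintro ⟨w, hw⟩ ⟨w', hw'⟩ hww
    simp only [hF, Prod.mk.injEq, Subtype.mk.injEq] at hww
    obtain ⟨hflat, hlen⟩ := hww
    have hlen' : ∀ i, (w i).length = (w' i).length := fun i =>
      congrArg Fin.val (congrFun hlen i)
    have hmaps : (List.ofFn (fun i => if e i then winv (w i) else w i)).map List.length
        = (List.ofFn (fun i => if e i then winv (w' i) else w' i)).map List.length := by
      simp only [List.map_ofFn]
      refine congrArg List.ofFn (funext fun i => ?_)
      cases hei : e i <;> simp [hei, Function.comp, winv_length, hlen' i]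
    have hofn := flatten_inj_of_map_length _ _ hmaps hflat
    rw [List.ofFn_inj] at hofn
    have hcomp : ∀ i, w i = w' i := by
      intro i
      have := congrFun hofn i
      cases hei : e i <;> simp [hei] at this
      · exact this
      · exact winv_injective this
    exact Subtype.ext (funext hcomp)
  calc (X ∩ ballK m k n).ncard = Nat.card ↥(X ∩ ballK m k n) :=
        (Nat.card_coe_set_eq _).symm
    _ ≤ Nat.card (↥Y × (Fin k → Fin (n+1))) := Nat.card_le_card_of_injective F hFinj
    _ = Y.ncard * (n+1)^k := by
        rw [Nat.card_prod, Nat.card_coe_set_eq]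
        congr 1
        simp [Nat.card_eq_fintype_card]



/-- If the image of `X ⊆ W^(k)` under
`π(w₁, …, w_k) = w₁^{e₁} ⋯ w_k^{e_k}` is exponentially negligible, then so is `X`. -/
theorem exponentially_negligible_of_image (m k : ℕ) (hm : 2 ≤ m) (hk : 1 ≤ k)
    (e : Fin k → Bool) (X : Set (Fin k → Word m))
    (h : ExpNegligible
      ((fun w : Fin k → Word m =>
          (List.ofFn (fun i => if e i then winv (w i) else w i)).flatten) '' X)) :
    ExpNegligibleK X := by
  obtain ⟨α, hα0, hα1, hev⟩ := h
  rw [eventually_atTop] at hev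
  obtain ⟨N, hN⟩ := hev
  set β : ℝ := (1 + α) / 2 with hβ
  have hβ0 : 0 < β := by rw [hβ]; linarith
  have hαβ : α < β := by rw [hβ]; linarith
  have hβ1 : β < 1 := by rw [hβ]; linarith
  set r : ℝ := α / β with hr
  have hr0 : 0 < r := div_pos hα0 hβ0
  have hr1 : r < 1 := (div_lt_one hβ0).2 hαβ
  have hαrβ : α = r * β := by rw [hr]; field_simp
  have htend : Tendsto (fun n : ℕ => (n : ℝ) ^ (k + 1) * r ^ n) atTop (𝓝 0) :=
    (summable_pow_mul_geometric_of_norm_lt_one (R := ℝ) (k + 1)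
      (by rwa [Real.norm_eq_abs, abs_of_pos hr0])).tendsto_atTop_zero
  have htend2 : Tendsto
      (fun n : ℕ => ((k : ℝ) + 1) ^ (k + 1) / r * (((n + 1 : ℕ) : ℝ) ^ (k + 1) * r ^ (n + 1)))
      atTop (𝓝 0) := by
    have := (htend.comp (tendsto_add_atTop_nat 1)).const_mul (((k : ℝ) + 1) ^ (k + 1) / r)
    simpa [Function.comp] using this
  have hevf : ∀ᶠ n : ℕ in atTop,
      ((k : ℝ) + 1) ^ (k + 1) / r * (((n + 1 : ℕ) : ℝ) ^ (k + 1) * r ^ (n + 1)) < 1 :=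
    htend2.eventually_lt_const one_pos
  refine ⟨β, hβ0, hβ1, ?_⟩
  filter_upwards [eventually_ge_atTop N, hevf] with n hnN hfn
  have hkn : n ≤ k * n := Nat.le_mul_of_pos_left n (by omega)
  -- positivity of the big ball cardinality
  have hBp0 : (0 : ℝ) < ((ball m (k * n)).ncard : ℝ) := by
    have : 0 < (ball m (k * n)).ncard :=
      lt_of_lt_of_le (Nat.pow_pos (by omega)) (ball_lower m (k * n))
    exact_mod_cast this
  have hBK0 : (0 : ℝ) < ((ballK m k n).ncard : ℝ) := by
    have : 0 < (ballK m k n).ncard := by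
      rw [ballK_ncard]
      exact Nat.pow_pos (lt_of_lt_of_le (Nat.pow_pos (by omega)) (ball_lower m n))
    exact_mod_cast this
  set Y := ((fun w : Fin k → Word m =>
      (List.ofFn (fun i => if e i then winv (w i) else w i)).flatten) '' X) with hYdef
  have h1 : ((Y ∩ ball m (k * n)).ncard : ℝ) ≤ α ^ (k * n) * ((ball m (k * n)).ncard : ℝ) := by
    have := hN (k * n) (le_trans hnN hkn)
    rwa [div_le_iff₀ hBp0] at this
  have h2 : ((ball m (k * n)).ncard : ℝ) ≤ ((k * n : ℕ) + 1) * ((2 * m : ℕ) : ℝ) ^ (k * n) := by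
    have := ball_upper m (k * n) (by omega)
    exact_mod_cast this
  have h3 : ((X ∩ ballK m k n).ncard : ℝ) ≤
      ((Y ∩ ball m (k * n)).ncard : ℝ) * ((n : ℝ) + 1) ^ k := by
    have := key_count m k n e X
    exact_mod_cast this
  have hαn : α ^ (k * n) ≤ α ^ n := pow_le_pow_of_le_one hα0.le hα1.le hkn
  have hBK : ((2 * m : ℕ) : ℝ) ^ (k * n) ≤ ((ballK m k n).ncard : ℝ) := by
    have : (2 * m) ^ (k * n) ≤ (ballK m k n).ncard := by
      rw [ballK_ncard, mul_comm k n, pow_mul]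
      exact Nat.pow_le_pow_left (ball_lower m n) k
    exact_mod_cast this
  -- the polynomial estimate
  have hb1 : ((n : ℝ) + 1) ^ k * ((k * n : ℕ) + 1) ≤ ((k : ℝ) + 1) ^ (k + 1) * ((n : ℝ) + 1) ^ (k + 1) := by
    have hnat : (n + 1) ^ k * (k * n + 1) ≤ (k + 1) ^ (k + 1) * (n + 1) ^ (k + 1) := by
      calc (n + 1) ^ k * (k * n + 1) ≤ ((k + 1) * (n + 1)) ^ k * ((k + 1) * (n + 1)) :=
            Nat.mul_le_mul (Nat.pow_le_pow_left (by nlinarith) k) (by nlinarith)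
        _ = (k + 1) ^ (k + 1) * (n + 1) ^ (k + 1) := by rw [← pow_succ, Nat.mul_pow]
    exact_mod_cast hnat
  have hfneq : ((k : ℝ) + 1) ^ (k + 1) / r * (((n + 1 : ℕ) : ℝ) ^ (k + 1) * r ^ (n + 1))
      = ((k : ℝ) + 1) ^ (k + 1) * ((n : ℝ) + 1) ^ (k + 1) * r ^ n := by
    push_cast
    rw [pow_succ]
    field_simp
    ring
  have hpolyr : ((n : ℝ) + 1) ^ k * ((k * n : ℕ) + 1) * r ^ n ≤ 1 := by
    calc ((n : ℝ) + 1) ^ k * ((k * n : ℕ) + 1) * r ^ n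
        ≤ ((k : ℝ) + 1) ^ (k + 1) * ((n : ℝ) + 1) ^ (k + 1) * r ^ n := by
          apply mul_le_mul_of_nonneg_right hb1 (by positivity)
      _ ≤ 1 := by rw [← hfneq]; exact hfn.le
  have hpoly : ((n : ℝ) + 1) ^ k * ((k * n : ℕ) + 1) * α ^ n ≤ β ^ n := by
    calc ((n : ℝ) + 1) ^ k * ((k * n : ℕ) + 1) * α ^ n
        = (((n : ℝ) + 1) ^ k * ((k * n : ℕ) + 1) * r ^ n) * β ^ n := by
          rw [hαrβ, mul_pow]; ring
      _ ≤ 1 * β ^ n := mul_le_mul_of_nonneg_right hpolyr (by positivity)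
      _ = β ^ n := one_mul _
  rw [div_le_iff₀ hBK0]
  calc ((X ∩ ballK m k n).ncard : ℝ)
      ≤ ((Y ∩ ball m (k * n)).ncard : ℝ) * ((n : ℝ) + 1) ^ k := h3
    _ ≤ (α ^ (k * n) * (((k * n : ℕ) + 1) * ((2 * m : ℕ) : ℝ) ^ (k * n))) * ((n : ℝ) + 1) ^ k := by
        apply mul_le_mul_of_nonneg_right _ (by positivity)
        calc ((Y ∩ ball m (k * n)).ncard : ℝ) ≤ α ^ (k * n) * ((ball m (k * n)).ncard : ℝ) := h1
          _ ≤ α ^ (k * n) * (((k * n : ℕ) + 1) * ((2 * m : ℕ) : ℝ) ^ (k * n)) := by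
              apply mul_le_mul_of_nonneg_left h2 (by positivity)
    _ = (((n : ℝ) + 1) ^ k * ((k * n : ℕ) + 1) * α ^ (k * n)) * ((2 * m : ℕ) : ℝ) ^ (k * n) := by
        ring
    _ ≤ (((n : ℝ) + 1) ^ k * ((k * n : ℕ) + 1) * α ^ n) * ((2 * m : ℕ) : ℝ) ^ (k * n) := by
        apply mul_le_mul_of_nonneg_right _ (by positivity)
        exact mul_le_mul_of_nonneg_left hαn (by positivity)
    _ ≤ β ^ n * ((2 * m : ℕ) : ℝ) ^ (k * n) :=
        mul_le_mul_of_nonneg_right hpoly (by positivity)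
    _ ≤ β ^ n * ((ballK m k n).ncard : ℝ) :=
        mul_le_mul_of_nonneg_left hBK (by positivity)


end GenericSubgroups
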